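/- For every positive integer m there exists δ₀ > 0 such that for every δ with 0 < δ < δ₀ and all integers j, k with 1 ≤ j ≤ m and 1 ≤ k ≤ m, the point v(j,k) − w₋(j) + (0, 0, −δ) belongs to (K + (0, 0, −δ)) ∩ (K + (−w₋(j))) ∩ (K + (w₊(k) + w₊(k+1) − u₁)). -/

import Mathlib

open Pointwise

/-- `w₋(j) = (0, −∑_{t=1}^{j} 1/t², ∑_{t=1}^{j} 1/t³)`. -/
noncomputable def wM (j : ℕ) : Fin 3 → ℝ :=
  ![0, -(∑ t ∈ Finset.Icc 1 j, (1 : ℝ) / (t : ℝ) ^ 2),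
    ∑ t ∈ Finset.Icc 1 j, (1 : ℝ) / (t : ℝ) ^ 3]

/-- `w₊(k) = (∑_{t=1}^{k} 1/t², ∑_{t=1}^{k} 1/t³, 0)`. -/
noncomputable def wP (k : ℕ) : Fin 3 → ℝ :=
  ![∑ t ∈ Finset.Icc 1 k, (1 : ℝ) / (t : ℝ) ^ 2,
    ∑ t ∈ Finset.Icc 1 k, (1 : ℝ) / (t : ℝ) ^ 3, 0]

/-- `ζ₂ = ∑_{t=1}^{∞} 1/t²`. -/
noncomputable def zeta2 : ℝ := ∑' t : ℕ, (1 : ℝ) / ((t : ℝ) + 1) ^ 2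

/-- `ζ₃ = ∑_{t=1}^{∞} 1/t³`. -/
noncomputable def zeta3 : ℝ := ∑' t : ℕ, (1 : ℝ) / ((t : ℝ) + 1) ^ 3

/-- `u₁ = (ζ₂, −2, ζ₃)`. -/
noncomputable def uOne : Fin 3 → ℝ := ![zeta2, -2, zeta3]

/-- `u₀ = (ζ₂, −2, 0)`. -/
noncomputable def uZero : Fin 3 → ℝ := ![zeta2, -2, 0]

/-- `v(j,k) = (1/(j+1)³)·w(j,k) + (((j+1)³ − 1)/(j+1)³)·w(j,k+1)` where
`w(j,k) = w₋(j) + w₊(k)`. -/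
noncomputable def vU (j k : ℕ) : Fin 3 → ℝ :=
  ((1 : ℝ) / ((j : ℝ) + 1) ^ 3) • (wM j + wP k) +
    ((((j : ℝ) + 1) ^ 3 - 1) / ((j : ℝ) + 1) ^ 3) • (wM j + wP (k + 1))

/-- The universal convex body `K`: the closure of the convex hull of the points
`w₋(j)`, `v(j,k)`, `u₀ − w₊(k)` and `u₁ − w₊(k)`. -/
noncomputable def KU : Set (Fin 3 → ℝ) :=
  closure (convexHull ℝ
    (Set.range wM ∪ (⋃ j : ℕ, Set.range (vU j)) ∪
     Set.range (fun k => uZero - wP k) ∪ Set.range (fun k => uOne - wP k)))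

open Real

/-! ### Auxiliary scalar quantities -/

private noncomputable def s2 (n : ℕ) : ℝ := ∑ t ∈ Finset.Icc 1 n, (1 : ℝ) / (t : ℝ) ^ 2
private noncomputable def s3 (n : ℕ) : ℝ := ∑ t ∈ Finset.Icc 1 n, (1 : ℝ) / (t : ℝ) ^ 3
private noncomputable def Aa (j : ℕ) : ℝ := 1 / ((j : ℝ) + 1) ^ 3
private noncomputable def Bb (j : ℕ) : ℝ := (((j : ℝ) + 1) ^ 3 - 1) / ((j : ℝ) + 1) ^ 3

private lemma summable_shift (p : ℕ) (hp : 1 < p) :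
    Summable (fun t : ℕ => (1 : ℝ) / ((t : ℝ) + 1) ^ p) := by
  have h := summable_one_div_nat_pow.mpr hp
  have h2 := (summable_nat_add_iff 1).mpr h
  refine h2.congr fun t => ?_
  push_cast
  ring

private lemma sum_Icc_eq (p n : ℕ) :
    ∑ t ∈ Finset.Icc 1 n, (1 : ℝ) / (t : ℝ) ^ p
      = ∑ i ∈ Finset.range n, (1 : ℝ) / ((i : ℝ) + 1) ^ p := by
  induction n with
  | zero => simp
  | succ n ih =>
    rw [Finset.sum_Icc_succ_top (Nat.succ_le_succ (Nat.zero_le n)), ih, Finset.sum_range_succ]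
    push_cast
    ring

private lemma sum_le_zeta (p : ℕ) (hp : 1 < p) (n : ℕ) :
    ∑ t ∈ Finset.Icc 1 n, (1 : ℝ) / (t : ℝ) ^ p ≤ ∑' t : ℕ, (1 : ℝ) / ((t : ℝ) + 1) ^ p := by
  rw [sum_Icc_eq]
  exact Summable.sum_le_tsum _ (fun i _ => by positivity) (summable_shift p hp)

private lemma one_le_zeta (p : ℕ) (hp : 1 < p) :
    (1 : ℝ) ≤ ∑' t : ℕ, (1 : ℝ) / ((t : ℝ) + 1) ^ p := by
  have h := Summable.le_tsum (summable_shift p hp) 0 (fun i _ => by positivity)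
  simpa using h

private lemma one_le_sum (p n : ℕ) (hn : 1 ≤ n) :
    (1 : ℝ) ≤ ∑ t ∈ Finset.Icc 1 n, (1 : ℝ) / (t : ℝ) ^ p := by
  have h := Finset.single_le_sum (f := fun t : ℕ => (1 : ℝ) / (t : ℝ) ^ p)
    (fun i _ => by positivity) (Finset.mem_Icc.2 ⟨le_refl 1, hn⟩)
  simpa using h

private lemma s2_nonneg (n : ℕ) : (0 : ℝ) ≤ s2 n :=
  Finset.sum_nonneg fun i _ => by positivity

private lemma one_le_s2 (n : ℕ) (hn : 1 ≤ n) : (1 : ℝ) ≤ s2 n := one_le_sum 2 n hn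
private lemma one_le_s3 (n : ℕ) (hn : 1 ≤ n) : (1 : ℝ) ≤ s3 n := one_le_sum 3 n hn
private lemma s2_le_zeta2 (n : ℕ) : s2 n ≤ zeta2 := sum_le_zeta 2 one_lt_two n
private lemma one_le_zeta2 : (1 : ℝ) ≤ zeta2 := one_le_zeta 2 one_lt_two
private lemma one_le_zeta3 : (1 : ℝ) ≤ zeta3 := one_le_zeta 3 (by norm_num)

private lemma zeta2_pos : (0 : ℝ) < zeta2 := lt_of_lt_of_le one_pos one_le_zeta2
private lemma zeta3_pos : (0 : ℝ) < zeta3 := lt_of_lt_of_le one_pos one_le_zeta3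

private lemma zeta2_le_two : zeta2 ≤ 2 := by
  have hb := hasSum_zeta_two
  have hsum : Summable (fun n : ℕ => (1 : ℝ) / (n : ℝ) ^ 2) := hb.summable
  have h0 : ∑' n : ℕ, (1 : ℝ) / (n : ℝ) ^ 2 = π ^ 2 / 6 := hb.tsum_eq
  have hshift := Summable.tsum_eq_zero_add hsum
  have hz2 : zeta2 = ∑' (b : ℕ), (((b : ℝ) + 1) ^ 2)⁻¹ := tsum_congr fun t => one_div _
  rw [hshift] at h0
  simp at h0
  rw [hz2, h0]
  nlinarith [Real.pi_lt_d2, Real.pi_pos]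

private lemma pow3_pos (j : ℕ) : (0 : ℝ) < ((j : ℝ) + 1) ^ 3 := by positivity

private lemma one_le_pow3 (j : ℕ) : (1 : ℝ) ≤ ((j : ℝ) + 1) ^ 3 :=
  one_le_pow₀ (by linarith [Nat.cast_nonneg (α := ℝ) j])

private lemma Aa_nonneg (j : ℕ) : (0 : ℝ) ≤ Aa j := by unfold Aa; positivity

private lemma Bb_nonneg (j : ℕ) : (0 : ℝ) ≤ Bb j :=
  div_nonneg (by linarith [one_le_pow3 j]) (pow3_pos j).le

private lemma Aa_add_Bb (j : ℕ) : Aa j + Bb j = 1 := by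
  unfold Aa Bb
  field_simp
  ring

/-! ### Coordinates -/

private lemma wM_c0 (j : ℕ) : wM j 0 = 0 := rfl
private lemma wM_c1 (j : ℕ) : wM j 1 = -(s2 j) := rfl
private lemma wM_c2 (j : ℕ) : wM j 2 = s3 j := rfl
private lemma wP_c0 (n : ℕ) : wP n 0 = s2 n := rfl
private lemma wP_c1 (n : ℕ) : wP n 1 = s3 n := rfl
private lemma wP_c2 (n : ℕ) : wP n 2 = 0 := rfl
private lemma u0_c0 : uZero 0 = zeta2 := rfl
private lemma u0_c1 : uZero 1 = -2 := rfl
private lemma u0_c2 : uZero 2 = 0 := rfl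
private lemma u1_c0 : uOne 0 = zeta2 := rfl
private lemma u1_c1 : uOne 1 = -2 := rfl
private lemma u1_c2 : uOne 2 = zeta3 := rfl

private lemma vU_c0 (j k : ℕ) : vU j k 0 = Aa j * s2 k + Bb j * s2 (k + 1) := by
  simp [vU, wM, wP, Aa, Bb, s2, Pi.add_apply, Pi.smul_apply, smul_eq_mul]

private lemma vU_c1 (j k : ℕ) :
    vU j k 1 = -(s2 j) + (Aa j * s3 k + Bb j * s3 (k + 1)) := by
  have hab := Aa_add_Bb j
  have h : vU j k 1 = Aa j * (-(s2 j) + s3 k) + Bb j * (-(s2 j) + s3 (k + 1)) := by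
    simp [vU, wM, wP, Aa, Bb, s2, s3, Pi.add_apply, Pi.smul_apply, smul_eq_mul]
  rw [h]
  linear_combination (-(s2 j)) * hab

private lemma vU_c2 (j k : ℕ) : vU j k 2 = s3 j := by
  have hab := Aa_add_Bb j
  have h : vU j k 2 = Aa j * s3 j + Bb j * s3 j := by
    simp [vU, wM, wP, Aa, Bb, s3, Pi.add_apply, Pi.smul_apply, smul_eq_mul]
  rw [h]
  linear_combination (s3 j) * hab

/-! ### Membership of the generators -/

private lemma KU_convex : Convex ℝ KU := (convex_convexHull ℝ _).closure

private lemma gen_subset :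
    (Set.range wM ∪ (⋃ j : ℕ, Set.range (vU j)) ∪
     Set.range (fun k => uZero - wP k) ∪ Set.range (fun k => uOne - wP k)) ⊆ KU :=
  (subset_convexHull ℝ _).trans subset_closure

private lemma mem_wM (j : ℕ) : wM j ∈ KU := by
  apply gen_subset
  simp only [Set.mem_union, Set.mem_iUnion, Set.mem_range]
  exact Or.inl (Or.inl (Or.inl ⟨j, rfl⟩))

private lemma mem_vU (j k : ℕ) : vU j k ∈ KU := by
  apply gen_subset
  simp only [Set.mem_union, Set.mem_iUnion, Set.mem_range]
  exact Or.inl (Or.inl (Or.inr ⟨j, k, rfl⟩))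

private lemma mem_u0 (k : ℕ) : uZero - wP k ∈ KU := by
  apply gen_subset
  simp only [Set.mem_union, Set.mem_iUnion, Set.mem_range]
  exact Or.inl (Or.inr ⟨k, rfl⟩)

private lemma mem_u1 (k : ℕ) : uOne - wP k ∈ KU := by
  apply gen_subset
  simp only [Set.mem_union, Set.mem_iUnion, Set.mem_range]
  exact Or.inr ⟨k, rfl⟩

private lemma wM_zero : wM 0 = 0 := by
  funext i
  fin_cases i <;> simp [wM]

private lemma wP_zero : wP 0 = 0 := by
  funext i
  fin_cases i <;> simp [wP]

private lemma vU_zero (k : ℕ) : vU 0 k = wP k := by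
  rw [vU, wM_zero]
  norm_num

private lemma mem_wP (k : ℕ) : wP k ∈ KU := vU_zero k ▸ mem_vU 0 k

private lemma mem_uZero : uZero ∈ KU := by
  have h := mem_u0 0
  rwa [wP_zero, sub_zero] at h

private lemma mem_zeroKU : (0 : Fin 3 → ℝ) ∈ KU := wM_zero ▸ mem_wM 0

/-! ### The three membership lemmas -/

/-- Membership (1): `vU j k - wM j ∈ KU`. -/
private lemma mem_one (j k : ℕ) : vU j k - wM j ∈ KU := by
  have h := KU_convex (mem_wP k) (mem_wP (k + 1)) (Aa_nonneg j) (Bb_nonneg j) (Aa_add_Bb j)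
  have hab := Aa_add_Bb j
  have hx : vU j k - wM j = Aa j • wP k + Bb j • wP (k + 1) := by
    funext i
    fin_cases i
    · simp only [Pi.sub_apply, Pi.add_apply, Pi.smul_apply, smul_eq_mul]
      rw [show ((⟨0, by omega⟩ : Fin 3)) = (0 : Fin 3) from rfl]
      rw [vU_c0, wM_c0, wP_c0, wP_c0]
      ring
    · simp only [Pi.sub_apply, Pi.add_apply, Pi.smul_apply, smul_eq_mul]
      rw [show ((⟨1, by omega⟩ : Fin 3)) = (1 : Fin 3) from rfl]
      rw [vU_c1, wM_c1, wP_c1, wP_c1]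
      ring
    · simp only [Pi.sub_apply, Pi.add_apply, Pi.smul_apply, smul_eq_mul]
      rw [show ((⟨2, by omega⟩ : Fin 3)) = (2 : Fin 3) from rfl]
      rw [vU_c2, wM_c2, wP_c2, wP_c2]
      ring
  rw [hx]
  exact h

/-- Membership (2): `vU j k + (0,0,-δ) ∈ KU` for `1 ≤ j`, `1 ≤ k`, `0 ≤ δ ≤ 1`. -/
private lemma mem_two (j k : ℕ) (hj : 1 ≤ j) (hk : 1 ≤ k) (δ : ℝ)
    (hδ0 : 0 ≤ δ) (hδ1 : δ ≤ 1) : vU j k + ![0, 0, -δ] ∈ KU := by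
  have hz2ne : zeta2 ≠ 0 := zeta2_pos.ne'
  have hab := Aa_add_Bb j
  have hA := Aa_nonneg j
  have hB := Bb_nonneg j
  have hs3pos : (0 : ℝ) < s3 j := lt_of_lt_of_le one_pos (one_le_s3 j hj)
  -- bounds on the combination `P2 = Aa j * s2 k + Bb j * s2 (k+1)`
  have hP2_1 : (1 : ℝ) ≤ Aa j * s2 k + Bb j * s2 (k + 1) := by
    nlinarith [mul_nonneg hA (sub_nonneg.2 (one_le_s2 k hk)),
      mul_nonneg hB (sub_nonneg.2 (one_le_s2 (k + 1) (Nat.le_add_left 1 k)))]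
  have hP2_z : Aa j * s2 k + Bb j * s2 (k + 1) ≤ zeta2 := by
    nlinarith [mul_nonneg hA (sub_nonneg.2 (s2_le_zeta2 k)),
      mul_nonneg hB (sub_nonneg.2 (s2_le_zeta2 (k + 1)))]
  have hP3_1 : (1 : ℝ) ≤ Aa j * s3 k + Bb j * s3 (k + 1) := by
    nlinarith [mul_nonneg hA (sub_nonneg.2 (one_le_s3 k hk)),
      mul_nonneg hB (sub_nonneg.2 (one_le_s3 (k + 1) (Nat.le_add_left 1 k)))]
  -- the auxiliary coefficients
  obtain ⟨r, hr0, hr1, hr_eq⟩ :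
      ∃ r : ℝ, 0 ≤ r ∧ r ≤ 1 ∧ r * zeta2 = Aa j * s2 k + Bb j * s2 (k + 1) := by
    refine ⟨(Aa j * s2 k + Bb j * s2 (k + 1)) / zeta2,
      div_nonneg (by linarith) zeta2_pos.le, ?_, div_mul_cancel₀ _ hz2ne⟩
    rw [div_le_one zeta2_pos]
    exact hP2_z
  obtain ⟨D, hDs2, hDpos, hD_eq⟩ :
      ∃ D : ℝ, s2 j ≤ D ∧ 0 < D ∧
        D * zeta2 = (Aa j * s3 k + Bb j * s3 (k + 1)) * zeta2
          + 2 * (Aa j * s2 k + Bb j * s2 (k + 1)) := by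
    refine ⟨(Aa j * s3 k + Bb j * s3 (k + 1))
        + 2 * (Aa j * s2 k + Bb j * s2 (k + 1)) / zeta2, ?_, ?_, by field_simp⟩
    · have h2 : (1 : ℝ) ≤ 2 * (Aa j * s2 k + Bb j * s2 (k + 1)) / zeta2 := by
        rw [le_div_iff₀ zeta2_pos]
        nlinarith [zeta2_le_two]
      linarith [s2_le_zeta2 j, zeta2_le_two]
    · have h2 : (0 : ℝ) ≤ 2 * (Aa j * s2 k + Bb j * s2 (k + 1)) / zeta2 :=
        div_nonneg (by linarith) zeta2_pos.le
      linarith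
  obtain ⟨t, ht0, ht1, htD⟩ : ∃ t : ℝ, 0 ≤ t ∧ t ≤ 1 ∧ t * D = s2 j :=
    ⟨s2 j / D, div_nonneg (s2_nonneg j) hDpos.le, (div_le_one hDpos).2 hDs2,
      div_mul_cancel₀ _ hDpos.ne'⟩
  obtain ⟨c, hc0, hc1, hcs⟩ : ∃ c : ℝ, 0 ≤ c ∧ c ≤ 1 ∧ c * s3 j = δ :=
    ⟨δ / s3 j, div_nonneg hδ0 hs3pos.le,
      (div_le_one hs3pos).2 (le_trans hδ1 (one_le_s3 j hj)),
      div_mul_cancel₀ _ hs3pos.ne'⟩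
  have hkey : t * ((Aa j * s3 k + Bb j * s3 (k + 1)) + 2 * r) = s2 j := by
    apply mul_right_cancel₀ hz2ne
    linear_combination 2 * t * hr_eq - t * hD_eq + zeta2 * htD
  -- the convex combination
  have hZ : r • uZero + (1 - r) • (0 : Fin 3 → ℝ) ∈ KU :=
    KU_convex mem_uZero mem_zeroKU hr0 (by linarith) (by ring)
  have hP : Aa j • wP k + Bb j • wP (k + 1) ∈ KU :=
    KU_convex (mem_wP k) (mem_wP (k + 1)) hA hB hab
  have hQ : (1 - t) • (Aa j • wP k + Bb j • wP (k + 1))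
      + t • (r • uZero + (1 - r) • (0 : Fin 3 → ℝ)) ∈ KU :=
    KU_convex hP hZ (by linarith) ht0 (by ring)
  have hF := KU_convex (mem_vU j k) hQ (by linarith : (0 : ℝ) ≤ 1 - c) hc0 (by ring)
  have hEq : vU j k + ![0, 0, -δ]
      = (1 - c) • vU j k + c • ((1 - t) • (Aa j • wP k + Bb j • wP (k + 1))
        + t • (r • uZero + (1 - r) • (0 : Fin 3 → ℝ))) := by
    funext i
    fin_cases i
    · simp only [Pi.add_apply, Pi.smul_apply, Pi.zero_apply, smul_eq_mul, Matrix.cons_val_zero]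
      rw [show ((⟨0, by omega⟩ : Fin 3)) = (0 : Fin 3) from rfl]
      rw [vU_c0, wP_c0, wP_c0, u0_c0]
      norm_num
      linear_combination (-(c * t)) * hr_eq
    · simp only [Pi.add_apply, Pi.smul_apply, Pi.zero_apply, smul_eq_mul, Matrix.cons_val_one, Matrix.head_cons]
      rw [show ((⟨1, by omega⟩ : Fin 3)) = (1 : Fin 3) from rfl]
      rw [vU_c1, wP_c1, wP_c1, u0_c1]
      norm_num
      linear_combination c * hkey
    · simp only [Pi.add_apply, Pi.smul_apply, Pi.zero_apply, smul_eq_mul, Matrix.cons_val_two, Matrix.tail_cons, Matrix.head_cons]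
      rw [show ((⟨2, by omega⟩ : Fin 3)) = (2 : Fin 3) from rfl]
      rw [vU_c2, wP_c2, wP_c2, u0_c2]
      norm_num
      rw [show (![0, 0, -δ] : Fin 3 → ℝ) 2 = -δ from rfl]
      linear_combination hcs
  rw [hEq]
  exact hF

/-- Membership (3). -/
private lemma mem_three (j k : ℕ) (δ : ℝ) (hδ0 : 0 ≤ δ) (hδ1 : δ ≤ 1) :
    vU j k - wM j + ![0, 0, -δ] - (wP k + wP (k + 1) - uOne) ∈ KU := by
  have hz3ne : zeta3 ≠ 0 := zeta3_pos.ne'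
  have hab := Aa_add_Bb j
  obtain ⟨c, hc0, hc1, hcs⟩ : ∃ c : ℝ, 0 ≤ c ∧ c ≤ 1 ∧ c * zeta3 = δ :=
    ⟨δ / zeta3, div_nonneg hδ0 zeta3_pos.le,
      (div_le_one zeta3_pos).2 (le_trans hδ1 one_le_zeta3),
      div_mul_cancel₀ _ hz3ne⟩
  have hX : Bb j • (uOne - wP k) + Aa j • (uOne - wP (k + 1)) ∈ KU :=
    KU_convex (mem_u1 k) (mem_u1 (k + 1)) (Bb_nonneg j) (Aa_nonneg j) (by linarith)
  have hY : Bb j • (uZero - wP k) + Aa j • (uZero - wP (k + 1)) ∈ KU :=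
    KU_convex (mem_u0 k) (mem_u0 (k + 1)) (Bb_nonneg j) (Aa_nonneg j) (by linarith)
  have hF := KU_convex hX hY (by linarith : (0 : ℝ) ≤ 1 - c) hc0 (by ring)
  have hEq : vU j k - wM j + ![0, 0, -δ] - (wP k + wP (k + 1) - uOne)
      = (1 - c) • (Bb j • (uOne - wP k) + Aa j • (uOne - wP (k + 1)))
        + c • (Bb j • (uZero - wP k) + Aa j • (uZero - wP (k + 1))) := by
    funext i
    fin_cases i
    · simp only [Pi.add_apply, Pi.sub_apply, Pi.smul_apply, smul_eq_mul, Matrix.cons_val_zero]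
      rw [show ((⟨0, by omega⟩ : Fin 3)) = (0 : Fin 3) from rfl]
      rw [vU_c0, wM_c0, wP_c0, wP_c0, u0_c0, u1_c0]
      norm_num
      linear_combination (s2 k + s2 (k + 1) - zeta2) * hab
    · simp only [Pi.add_apply, Pi.sub_apply, Pi.smul_apply, smul_eq_mul, Matrix.cons_val_one, Matrix.head_cons]
      rw [show ((⟨1, by omega⟩ : Fin 3)) = (1 : Fin 3) from rfl]
      rw [vU_c1, wM_c1, wP_c1, wP_c1, u0_c1, u1_c1]
      norm_num
      linear_combination (s3 k + s3 (k + 1) + 2) * hab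
    · simp only [Pi.add_apply, Pi.sub_apply, Pi.smul_apply, smul_eq_mul, Matrix.cons_val_two, Matrix.tail_cons, Matrix.head_cons]
      rw [show ((⟨2, by omega⟩ : Fin 3)) = (2 : Fin 3) from rfl]
      rw [vU_c2, wM_c2, wP_c2, wP_c2, u0_c2, u1_c2]
      norm_num
      rw [show (![0, 0, -δ] : Fin 3 → ℝ) 2 = -δ from rfl]
      linear_combination hcs - ((1 - c) * zeta3) * hab
  rw [hEq]
  exact hF

/-- **Witness point for `A_i ∩ B_j ∩ C_k`.** For every positive integer `m` there
is `δ₀ > 0` such that for every `0 < δ < δ₀` and all `1 ≤ j ≤ m`, `1 ≤ k ≤ m`, the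
point `v(j,k) − w₋(j) + (0,0,−δ)` lies in the intersection of the translates of
`K` by `(0,0,−δ)`, by `−w₋(j)`, and by `w₊(k) + w₊(k+1) − u₁`. -/
theorem witness_Ai_Bj_Ck (m : ℕ) (hm : 0 < m) :
    ∃ δ₀ : ℝ, 0 < δ₀ ∧ ∀ δ : ℝ, 0 < δ → δ < δ₀ →
      ∀ j k : ℕ, 1 ≤ j → j ≤ m → 1 ≤ k → k ≤ m →
        vU j k - wM j + ![0, 0, -δ] ∈
          (![(0 : ℝ), 0, -δ] +ᵥ KU) ∩ ((-(wM j)) +ᵥ KU) ∩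
            ((wP k + wP (k + 1) - uOne) +ᵥ KU) := by
  refine ⟨1, one_pos, fun δ hδ0 hδ1 j k hj hjm hk hkm => ⟨⟨?_, ?_⟩, ?_⟩⟩
  · refine Set.mem_vadd_set.2 ⟨vU j k - wM j, mem_one j k, ?_⟩
    rw [vadd_eq_add]
    funext i
    fin_cases i <;> simp [wM, vU, wP] <;> ring
  · refine Set.mem_vadd_set.2 ⟨vU j k + ![0, 0, -δ], mem_two j k hj hk δ hδ0.le hδ1.le, ?_⟩
    rw [vadd_eq_add]
    abel
  · refine Set.mem_vadd_set.2
      ⟨vU j k - wM j + ![0, 0, -δ] - (wP k + wP (k + 1) - uOne),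
        mem_three j k δ hδ0.le hδ1.le, ?_⟩
    rw [vadd_eq_add]
    abel
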